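/- Let P be the orthogonal projection on L²(ℝ²) given by multiplication by the indicator of the vertical strip {x : |x₁| ≤ h}. Suppose {u_n}_{n∈S} and {v_λ}_{λ∈Λ'} are families of functions in L²(ℝ²) satisfying, for some N ≥ 2 and constants a, b > 0 and C > 0: |u_n(x)| ≤ C·a·⟨|a x₁ + c_n|⟩^{−N}⟨|a x₂ + d_n|⟩^{−N} for shifts c_n, d_n. Then for any fixed v with the same decay profile |v(x)| ≤ C·a·⟨|a x₁ + c'|⟩^{−N}⟨|a x₂ + d'|⟩^{−N}, the sum over all integer shifts (c_n, d_n) ∈ (ℤ/2)² of ∫_{|x₁|≤h} ∫_ℝ |u_n(x)||v(x)| dx is bounded by C'·h·a for a constant C' depending only on C and N. -/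

import Mathlib

open MeasureTheory Real Set

noncomputable def sq' (t : ℝ) : ℝ := (1 + t ^ 2)⁻¹

lemma sq'_nonneg (t : ℝ) : 0 ≤ sq' t := by unfold sq'; positivity

lemma sq'_le_one (t : ℝ) : sq' t ≤ 1 := by
  unfold sq'
  rw [inv_le_one_iff₀]; right; nlinarith [sq_nonneg t]

lemma decay_le_sq' (N : ℕ) (hN : 2 ≤ N) (t : ℝ) :
    (1 + t ^ 2) ^ (-(N : ℝ) / 2) ≤ sq' t := by
  unfold sq'
  rw [← Real.rpow_neg_one (1 + t ^ 2)]
  apply Real.rpow_le_rpow_of_exponent_le (by nlinarith [sq_nonneg t])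
  have : (2 : ℝ) ≤ (N : ℝ) := by exact_mod_cast hN
  linarith

lemma cont_affine_sq' (a b : ℝ) : Continuous fun t : ℝ => sq' (a * t + b) := by
  unfold sq'
  apply Continuous.inv₀ (by continuity)
  intro t; nlinarith [sq_nonneg (a * t + b)]

lemma integrable_affine_sq' {a : ℝ} (ha : a ≠ 0) (b : ℝ) :
    Integrable fun t : ℝ => sq' (a * t + b) := by
  have h1 : Integrable fun t : ℝ => sq' (t + b) := by
    simpa [sq'] using integrable_inv_one_add_sq.comp_add_right b
  simpa using h1.comp_mul_left' ha

lemma integral_affine_sq' {a : ℝ} (ha : 0 < a) (b : ℝ) :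
    ∫ t : ℝ, sq' (a * t + b) = a⁻¹ * π := by
  have h1 : (∫ t : ℝ, sq' (a * t + b)) = |a⁻¹| • ∫ t : ℝ, sq' (t + b) :=
    MeasureTheory.Measure.integral_comp_mul_left (fun y => sq' (y + b)) a
  rw [h1]
  have h2 : (∫ t : ℝ, sq' (t + b)) = ∫ t : ℝ, sq' t := integral_add_right_eq_self _ b
  have h3 : (∫ t : ℝ, sq' t) = π := by
    simp only [sq']; exact integral_univ_inv_one_add_sq
  rw [h2, h3, abs_of_pos (by positivity), smul_eq_mul]

lemma sq'_le_four_mul_integral (y : ℝ) :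
    sq' y ≤ 4 * ∫ u in Set.Ioc (y - 4⁻¹) (y + 4⁻¹), sq' u := by
  have hkey : ∀ u ∈ Set.Ioc (y - 4⁻¹) (y + 4⁻¹), (2 * (1 + y ^ 2))⁻¹ ≤ sq' u := by
    intro u hu
    unfold sq'
    apply inv_anti₀ (by nlinarith [sq_nonneg u])
    rcases hu with ⟨h1, h2⟩
    nlinarith [sq_nonneg (u - y), sq_nonneg (2*y - 1), sq_nonneg (2*y + 1)]
  have hmono : (∫ _ in Set.Ioc (y - 4⁻¹) (y + 4⁻¹), (2 * (1 + y ^ 2))⁻¹) ≤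
      ∫ u in Set.Ioc (y - 4⁻¹) (y + 4⁻¹), sq' u := by
    apply setIntegral_mono_on (integrableOn_const measure_Ioc_lt_top.ne)
      (integrable_inv_one_add_sq.integrableOn) measurableSet_Ioc hkey
  have hconst : (∫ _ in Set.Ioc (y - 4⁻¹) (y + 4⁻¹), (2 * (1 + y ^ 2))⁻¹)
      = 2⁻¹ * (2 * (1 + y ^ 2))⁻¹ := by
    rw [setIntegral_const, Real.volume_real_Ioc_of_le (by linarith), smul_eq_mul]
    norm_num
  have hy : (0:ℝ) < 1 + y ^ 2 := by positivity
  have : sq' y = 4 * (2⁻¹ * (2 * (1 + y ^ 2))⁻¹) := by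
    unfold sq'; field_simp; ring
  rw [this]
  linarith

lemma sum_sq'_le (F : Finset ℤ) (s : ℝ) :
    ∑ m ∈ F, sq' (s + (m : ℝ) / 2) ≤ 4 * π := by
  set I : ℤ → Set ℝ := fun m => Set.Ioc (s + (m : ℝ) / 2 - 4⁻¹) (s + (m : ℝ) / 2 + 4⁻¹) with hI
  have hdisj : Set.Pairwise (↑F) (Function.onFun Disjoint I) := by
    intro m _ n _ hmn
    have h1 : (1 : ℝ) ≤ |(m : ℝ) - (n : ℝ)| := by
      rw [← Int.cast_sub, ← Int.cast_abs]
      exact_mod_cast Int.one_le_abs (sub_ne_zero.2 hmn)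
    simp only [Function.onFun, hI, Set.Ioc_disjoint_Ioc]
    rcases le_or_gt ((m:ℝ)) ((n:ℝ)) with hle | hlt
    · have : (m:ℝ) + 1 ≤ n := by
        rw [abs_of_nonpos (by linarith)] at h1; linarith
      apply le_trans (min_le_left _ _) (le_trans ?_ (le_max_right _ _))
      linarith
    · have : (n:ℝ) + 1 ≤ m := by
        rw [abs_of_nonneg (by linarith)] at h1; linarith
      apply le_trans (min_le_right _ _) (le_trans ?_ (le_max_left _ _))
      linarith
  have hmeas : ∀ m ∈ F, MeasurableSet (I m) := fun m _ => measurableSet_Ioc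
  have hint : ∀ m ∈ F, IntegrableOn sq' (I m) := fun m _ =>
    (by exact (integrable_inv_one_add_sq.integrableOn (s := I m)))
  calc ∑ m ∈ F, sq' (s + (m : ℝ) / 2)
      ≤ ∑ m ∈ F, 4 * ∫ u in I m, sq' u :=
        Finset.sum_le_sum fun m _ => sq'_le_four_mul_integral _
    _ = 4 * ∑ m ∈ F, ∫ u in I m, sq' u := by rw [Finset.mul_sum]
    _ = 4 * ∫ u in ⋃ m ∈ F, I m, sq' u := by
        rw [integral_biUnion_finset F hmeas hdisj hint]
    _ ≤ 4 * ∫ u : ℝ, sq' u := by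
        gcongr
        exact Filter.Eventually.of_forall sq'_nonneg
        exact integrable_inv_one_add_sq
        exact Measure.restrict_le_self
    _ = 4 * π := by simp only [sq']; rw [integral_univ_inv_one_add_sq]

lemma A_bound {h a : ℝ} (hh : 0 < h) (ha : 0 < a) (F : Finset ℤ) :
    ∑ k ∈ F, ∫ t in Set.Icc (-h) h, sq' (a * t + (k : ℝ) / 2) ≤ 4 * π * (2 * h) := by
  have hint : ∀ k ∈ F, IntegrableOn (fun t => sq' (a * t + (k : ℝ) / 2)) (Set.Icc (-h) h) :=
    fun k _ => (integrable_affine_sq' ha.ne' _).integrableOn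
  rw [← integral_finset_sum F hint]
  have hmono : (∫ t in Set.Icc (-h) h, ∑ k ∈ F, sq' (a * t + (k : ℝ) / 2))
      ≤ ∫ _ in Set.Icc (-h) h, (4 * π : ℝ) := by
    apply setIntegral_mono_on (integrable_finset_sum F hint)
      (integrableOn_const measure_Icc_lt_top.ne) measurableSet_Icc
    intro t _
    exact sum_sq'_le F (a * t)
  refine hmono.trans ?_
  rw [setIntegral_const, Real.volume_real_Icc_of_le (by linarith), smul_eq_mul]
  ring_nf
  nlinarith [pi_pos]

lemma B_int {a : ℝ} (ha : a ≠ 0) (b d' : ℝ) :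
    Integrable fun t : ℝ => sq' (a * t + b) * sq' (a * t + d') := by
  apply (integrable_affine_sq' ha d').mono'
    ((cont_affine_sq' a b).mul (cont_affine_sq' a d')).aestronglyMeasurable
  refine Filter.Eventually.of_forall fun t => ?_
  simp only [Pi.mul_apply]
  rw [Real.norm_eq_abs, abs_of_nonneg (mul_nonneg (sq'_nonneg _) (sq'_nonneg _))]
  exact mul_le_of_le_one_left (sq'_nonneg _) (sq'_le_one _)

lemma B_bound {a : ℝ} (ha : 0 < a) (d' : ℝ) (F : Finset ℤ) :
    ∑ k ∈ F, ∫ t : ℝ, sq' (a * t + (k : ℝ) / 2) * sq' (a * t + d')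
      ≤ 4 * π * (a⁻¹ * π) := by
  rw [← integral_finset_sum F (fun k _ => B_int ha.ne' _ d')]
  have hmono : (∫ t : ℝ, ∑ k ∈ F, sq' (a * t + (k : ℝ) / 2) * sq' (a * t + d'))
      ≤ ∫ t : ℝ, 4 * π * sq' (a * t + d') := by
    apply integral_mono (integrable_finset_sum F (fun k _ => B_int ha.ne' _ d'))
      ((integrable_affine_sq' ha.ne' d').const_mul _)
    intro t
    simp only [← Finset.sum_mul]
    exact mul_le_mul_of_nonneg_right (sum_sq'_le F (a * t)) (sq'_nonneg _)
  refine hmono.trans ?_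
  rw [integral_const_mul, integral_affine_sq' ha]

lemma strip_eq (h : ℝ) :
    {x : ℝ × ℝ | |x.1| ≤ h} = Set.Icc (-h) h ×ˢ (Set.univ : Set ℝ) := by
  ext x; simp [abs_le, Set.mem_Icc]

lemma strip_restrict (h : ℝ) :
    (volume : Measure (ℝ × ℝ)).restrict (Set.Icc (-h) h ×ˢ (Set.univ : Set ℝ))
      = ((volume : Measure ℝ).restrict (Set.Icc (-h) h)).prod volume := by
  rw [Measure.volume_eq_prod, ← Measure.prod_restrict, Measure.restrict_univ]

/-- key estimate behind the cluster coherence bound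
`μ_c(Λ₂, P_j G_j; G_j) ≲ h s`.  If each `u_m` and `v` obey the Gabor-type decay
`≤ C a ⟨|a x₁ + m₁/2|⟩^{-N} ⟨|a x₂ + m₂/2|⟩^{-N}` (with shifts in `(ℤ/2)²` for
`u_m` and arbitrary shifts `c', d'` for `v`), then the sum over all shifts of
`∫_{|x₁| ≤ h} |u_m| |v|` is bounded by `C' h a`, with `C'` depending only on `C`
and `N`. -/
theorem strip_gabor_sum_estimate (N : ℕ) (hN : 2 ≤ N) (C : ℝ) (hC : 0 < C) :
    ∃ C' : ℝ, 0 < C' ∧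
      ∀ (h a : ℝ), 0 < h → 0 < a →
        ∀ (u : ℤ × ℤ → ℝ × ℝ → ℂ) (v : ℝ × ℝ → ℂ) (c' d' : ℝ),
          (∀ (m : ℤ × ℤ) (x : ℝ × ℝ),
            ‖u m x‖ ≤ C * a * (1 + (a * x.1 + (m.1 : ℝ) / 2) ^ 2) ^ (-(N : ℝ) / 2) *
              (1 + (a * x.2 + (m.2 : ℝ) / 2) ^ 2) ^ (-(N : ℝ) / 2)) →
          (∀ x : ℝ × ℝ,
            ‖v x‖ ≤ C * a * (1 + (a * x.1 + c') ^ 2) ^ (-(N : ℝ) / 2) *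
              (1 + (a * x.2 + d') ^ 2) ^ (-(N : ℝ) / 2)) →
          (∑' m : ℤ × ℤ, ∫ x in {x : ℝ × ℝ | |x.1| ≤ h}, ‖u m x‖ * ‖v x‖)
            ≤ C' * h * a := by
  refine ⟨32 * π ^ 3 * C ^ 2, by positivity, ?_⟩
  intro h a hh ha u v c' d' hu hv
  set A : ℤ → ℝ := fun k => ∫ t in Set.Icc (-h) h, sq' (a * t + (k : ℝ) / 2) with hA
  set B : ℤ → ℝ := fun k => ∫ t : ℝ, sq' (a * t + (k : ℝ) / 2) * sq' (a * t + d') with hB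
  set I : ℤ × ℤ → ℝ := fun m => ∫ x in {x : ℝ × ℝ | |x.1| ≤ h}, ‖u m x‖ * ‖v x‖ with hI
  have hAnn : ∀ k, 0 ≤ A k := fun k =>
    setIntegral_nonneg measurableSet_Icc fun t _ => sq'_nonneg _
  have hBnn : ∀ k, 0 ≤ B k := fun k =>
    integral_nonneg fun t => mul_nonneg (sq'_nonneg _) (sq'_nonneg _)
  -- per-m bound
  have key : ∀ m : ℤ × ℤ, I m ≤ C ^ 2 * a ^ 2 * (A m.1 * B m.2) := by
    intro m
    have hμ := strip_restrict h
    have hrw : I m = ∫ x, ‖u m x‖ * ‖v x‖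
        ∂(((volume : Measure ℝ).restrict (Set.Icc (-h) h)).prod volume) := by
      rw [hI]; simp only [strip_eq h, ← hμ]
    set f1 : ℝ → ℝ := fun t => C * a * sq' (a * t + (m.1 : ℝ) / 2) with hf1
    set f2 : ℝ → ℝ := fun t =>
      C * a * (sq' (a * t + (m.2 : ℝ) / 2) * sq' (a * t + d')) with hf2
    have hf1i : Integrable f1 ((volume : Measure ℝ).restrict (Set.Icc (-h) h)) :=
      ((integrable_affine_sq' ha.ne' _).const_mul _).integrableOn
    have hf2i : Integrable f2 (volume : Measure ℝ) :=
      (B_int ha.ne' _ d').const_mul _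
    have hgi : Integrable (fun x : ℝ × ℝ => f1 x.1 * f2 x.2)
        (((volume : Measure ℝ).restrict (Set.Icc (-h) h)).prod volume) :=
      hf1i.mul_prod hf2i
    have hpt : ∀ x : ℝ × ℝ, ‖u m x‖ * ‖v x‖ ≤ f1 x.1 * f2 x.2 := by
      intro x
      have b1 : ‖u m x‖ ≤ C * a * sq' (a * x.1 + (m.1 : ℝ) / 2) *
          sq' (a * x.2 + (m.2 : ℝ) / 2) := by
        refine (hu m x).trans ?_
        have w2nn : (0:ℝ) ≤ (1 + (a * x.2 + (m.2 : ℝ) / 2) ^ 2) ^ (-(N : ℝ) / 2) := by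
          positivity
        have h1 := decay_le_sq' N hN (a * x.1 + (m.1 : ℝ) / 2)
        have h2 := decay_le_sq' N hN (a * x.2 + (m.2 : ℝ) / 2)
        have hCa : (0:ℝ) ≤ C * a := by positivity
        calc C * a * (1 + (a * x.1 + (m.1 : ℝ) / 2) ^ 2) ^ (-(N : ℝ) / 2) *
              (1 + (a * x.2 + (m.2 : ℝ) / 2) ^ 2) ^ (-(N : ℝ) / 2)
            ≤ C * a * sq' (a * x.1 + (m.1 : ℝ) / 2) *
              (1 + (a * x.2 + (m.2 : ℝ) / 2) ^ 2) ^ (-(N : ℝ) / 2) := by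
              exact mul_le_mul_of_nonneg_right
                (mul_le_mul_of_nonneg_left h1 hCa) w2nn
          _ ≤ C * a * sq' (a * x.1 + (m.1 : ℝ) / 2) * sq' (a * x.2 + (m.2 : ℝ) / 2) :=
              mul_le_mul_of_nonneg_left h2
                (mul_nonneg hCa (sq'_nonneg _))
      have b2 : ‖v x‖ ≤ C * a * 1 * sq' (a * x.2 + d') := by
        refine (hv x).trans ?_
        have w2nn : (0:ℝ) ≤ (1 + (a * x.2 + d') ^ 2) ^ (-(N : ℝ) / 2) := by positivity
        have h3 : (1 + (a * x.1 + c') ^ 2) ^ (-(N : ℝ) / 2) ≤ 1 :=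
          (decay_le_sq' N hN _).trans (sq'_le_one _)
        have h4 := decay_le_sq' N hN (a * x.2 + d')
        have hCa : (0:ℝ) ≤ C * a := by positivity
        calc C * a * (1 + (a * x.1 + c') ^ 2) ^ (-(N : ℝ) / 2) *
              (1 + (a * x.2 + d') ^ 2) ^ (-(N : ℝ) / 2)
            ≤ C * a * 1 * (1 + (a * x.2 + d') ^ 2) ^ (-(N : ℝ) / 2) :=
              mul_le_mul_of_nonneg_right (mul_le_mul_of_nonneg_left h3 hCa) w2nn
          _ ≤ C * a * 1 * sq' (a * x.2 + d') :=
              mul_le_mul_of_nonneg_left h4 (by simpa using hCa)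
      calc ‖u m x‖ * ‖v x‖
          ≤ (C * a * sq' (a * x.1 + (m.1 : ℝ) / 2) * sq' (a * x.2 + (m.2 : ℝ) / 2)) *
            (C * a * 1 * sq' (a * x.2 + d')) :=
            mul_le_mul b1 b2 (norm_nonneg _)
              (mul_nonneg (mul_nonneg (by positivity) (sq'_nonneg _)) (sq'_nonneg _))
        _ = f1 x.1 * f2 x.2 := by rw [hf1, hf2]; ring
    have hle : I m ≤ ∫ x, f1 x.1 * f2 x.2
        ∂(((volume : Measure ℝ).restrict (Set.Icc (-h) h)).prod volume) := by
      rw [hrw]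
      exact integral_mono_of_nonneg
        (Filter.Eventually.of_forall fun x => mul_nonneg (norm_nonneg _) (norm_nonneg _))
        hgi (Filter.Eventually.of_forall hpt)
    refine hle.trans ?_
    rw [integral_prod_mul f1 f2, hf1, hf2]
    simp only [integral_const_mul]
    have heq : (C * a * A m.1) * (C * a * B m.2) = C ^ 2 * a ^ 2 * (A m.1 * B m.2) := by
      ring
    exact le_of_eq heq
  have hInn : ∀ m, 0 ≤ I m := fun m =>
    setIntegral_nonneg
      ((isClosed_le (continuous_fst.abs) continuous_const).measurableSet)
      fun x _ => mul_nonneg (norm_nonneg _) (norm_nonneg _)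
  by_cases hs : Summable I
  · refine hs.tsum_le_of_sum_le ?_
    intro F
    have hsub : F ⊆ (F.image Prod.fst) ×ˢ (F.image Prod.snd) := by
      intro m hm
      rw [Finset.mem_product]
      exact ⟨Finset.mem_image.2 ⟨m, hm, rfl⟩, Finset.mem_image.2 ⟨m, hm, rfl⟩⟩
    calc ∑ m ∈ F, I m
        ≤ ∑ m ∈ F, C ^ 2 * a ^ 2 * (A m.1 * B m.2) :=
          Finset.sum_le_sum fun m _ => key m
      _ = C ^ 2 * a ^ 2 * ∑ m ∈ F, A m.1 * B m.2 := by rw [← Finset.mul_sum]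
      _ ≤ C ^ 2 * a ^ 2 * ∑ p ∈ (F.image Prod.fst) ×ˢ (F.image Prod.snd), A p.1 * B p.2 := by
          gcongr
          exact fun p _ _ => mul_nonneg (hAnn p.1) (hBnn p.2)
      _ = C ^ 2 * a ^ 2 *
            ((∑ k ∈ F.image Prod.fst, A k) * (∑ k ∈ F.image Prod.snd, B k)) := by
          rw [Finset.sum_product, ← Finset.sum_mul_sum]
      _ ≤ C ^ 2 * a ^ 2 * ((4 * π * (2 * h)) * (4 * π * (a⁻¹ * π))) := by
          have h1 := A_bound hh ha (F.image Prod.fst)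
          have h2 := B_bound ha d' (F.image Prod.snd)
          have h3 : (0:ℝ) ≤ ∑ k ∈ F.image Prod.fst, A k :=
            Finset.sum_nonneg fun k _ => hAnn k
          exact mul_le_mul_of_nonneg_left
            (mul_le_mul h1 h2 (Finset.sum_nonneg fun k _ => hBnn k) (by positivity))
            (by positivity)
      _ = 32 * π ^ 3 * C ^ 2 * h * a := by
          field_simp
          ring
  · rw [tsum_eq_zero_of_not_summable hs]
    positivity
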